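/- Fix r > 0 and define g_r(c) := σ(1/(rc)) · σ(−1/(rc)) / (r c²) for c > 0, where σ(x) = 1/(1+e^{−x}). Then g_r(c) > 0 for all c > 0, g_r(c) → 0 as c → 0⁺, g_r(c) → 0 as c → +∞, and a point c > 0 is a critical point of g_r (i.e. g_r′(c) = 0) if and only if tanh(1/(2rc)) = 2rc. -/

import Mathlib

open Filter

/-- The logistic function `σ(x) = 1/(1+e^{-x})`. -/
noncomputable def logistic (x : ℝ) : ℝ := 1 / (1 + Real.exp (-x))

noncomputable def Fq (r c : ℝ) : ℝ :=
  r * c ^ 2 * (2 + Real.exp (1 / (r * c)) + Real.exp (-(1 / (r * c))))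

lemma Fq_pos {r c : ℝ} (hr : 0 < r) (hc : 0 < c) : 0 < Fq r c := by
  have h1 := Real.exp_pos (1 / (r * c))
  have h2 := Real.exp_pos (-(1 / (r * c)))
  unfold Fq
  positivity

lemma g_eq {r c : ℝ} (hr : 0 < r) (hc : 0 < c) :
    logistic (1 / (r * c)) * logistic (-(1 / (r * c))) / (r * c ^ 2) = (Fq r c)⁻¹ := by
  have h1 := Real.exp_pos (1 / (r * c))
  have h2 := Real.exp_pos (-(1 / (r * c)))
  have hm : Real.exp (-(1 / (r * c))) * Real.exp (1 / (r * c)) = 1 := by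
    rw [← Real.exp_add]; simp
  unfold logistic Fq
  rw [neg_neg]
  set E := Real.exp (1 / (r * c)) with hE
  set E' := Real.exp (-(1 / (r * c))) with hE'
  have hrc : r * c ^ 2 ≠ 0 := by positivity
  have d1 : (1 : ℝ) + E' ≠ 0 := by positivity
  have d2 : (1 : ℝ) + E ≠ 0 := by positivity
  have d3 : (2 : ℝ) + E + E' > 0 := by positivity
  field_simp
  linear_combination (-1 : ℝ) * hm

lemma hasDerivAt_Fq (r : ℝ) (hr : 0 < r) {c : ℝ} (hc : 0 < c) :
    HasDerivAt (Fq r)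
      (2 * r * c * (2 + Real.exp (1 / (r * c)) + Real.exp (-(1 / (r * c))))
        - (Real.exp (1 / (r * c)) - Real.exp (-(1 / (r * c))))) c := by
  have hrc : r * c ≠ 0 := by positivity
  have hu : HasDerivAt (fun c : ℝ => 1 / (r * c)) (-(r / (r * c) ^ 2)) c := by
    have h1 : HasDerivAt (fun c : ℝ => r * c) r c := by
      simpa using (hasDerivAt_id c).const_mul r
    simp only [one_div]
    exact (h1.inv hrc).congr_deriv (neg_div _ _)
  have hE : HasDerivAt (fun c : ℝ => Real.exp (1 / (r * c)))
      (Real.exp (1 / (r * c)) * (-(r / (r * c) ^ 2))) c := hu.exp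
  have hE' : HasDerivAt (fun c : ℝ => Real.exp (-(1 / (r * c))))
      (Real.exp (-(1 / (r * c))) * (r / (r * c) ^ 2)) c := by
    simpa using hu.neg.exp
  have hS : HasDerivAt (fun c : ℝ => 2 + Real.exp (1 / (r * c)) + Real.exp (-(1 / (r * c))))
      (Real.exp (1 / (r * c)) * (-(r / (r * c) ^ 2))
        + Real.exp (-(1 / (r * c))) * (r / (r * c) ^ 2)) c :=
    ((hE.const_add 2).add hE')
  have hP : HasDerivAt (fun c : ℝ => r * c ^ 2) (r * (2 * c)) c := by
    simpa using (hasDerivAt_pow 2 c).const_mul r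
  have := hP.mul hS
  refine this.congr_deriv ?_
  have hc2 : c ≠ 0 := ne_of_gt hc
  have hr0 : r ≠ 0 := ne_of_gt hr
  field_simp
  ring

lemma deriv_g (r : ℝ) (hr : 0 < r) {c : ℝ} (hc : 0 < c) :
    deriv (fun c : ℝ =>
        logistic (1 / (r * c)) * logistic (-(1 / (r * c))) / (r * c ^ 2)) c
      = -(2 * r * c * (2 + Real.exp (1 / (r * c)) + Real.exp (-(1 / (r * c))))
        - (Real.exp (1 / (r * c)) - Real.exp (-(1 / (r * c))))) / (Fq r c) ^ 2 := by
  have heq : (fun c : ℝ =>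
      logistic (1 / (r * c)) * logistic (-(1 / (r * c))) / (r * c ^ 2))
      =ᶠ[nhds c] fun c => (Fq r c)⁻¹ := by
    filter_upwards [IsOpen.mem_nhds isOpen_Ioi hc] with x hx
    exact g_eq hr hx
  rw [heq.deriv_eq]
  exact (((hasDerivAt_Fq r hr hc).inv (Fq_pos hr hc).ne')).deriv

theorem qER_transition_derivative_properties (r : ℝ) (hr : 0 < r) :
    (∀ c : ℝ, 0 < c →
      0 < logistic (1 / (r * c)) * logistic (-(1 / (r * c))) / (r * c ^ 2)) ∧
    Tendsto (fun c : ℝ => logistic (1 / (r * c)) * logistic (-(1 / (r * c))) / (r * c ^ 2))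
      (nhdsWithin 0 (Set.Ioi 0)) (nhds 0) ∧
    Tendsto (fun c : ℝ => logistic (1 / (r * c)) * logistic (-(1 / (r * c))) / (r * c ^ 2))
      atTop (nhds 0) ∧
    (∀ c : ℝ, 0 < c →
      (deriv (fun c : ℝ =>
          logistic (1 / (r * c)) * logistic (-(1 / (r * c))) / (r * c ^ 2)) c = 0 ↔
        Real.tanh (1 / (2 * r * c)) = 2 * r * c)) := by
  refine ⟨?_, ?_, ?_, ?_⟩
  · intro c hc
    rw [g_eq hr hc]
    exact inv_pos.mpr (Fq_pos hr hc)
  · -- c → 0⁺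
    have hφ : Tendsto (fun c : ℝ => 1 / (r * c)) (nhdsWithin 0 (Set.Ioi 0)) atTop := by
      simp only [one_div]
      apply tendsto_inv_nhdsGT_zero.comp
      rw [tendsto_nhdsWithin_iff]
      constructor
      · have : Tendsto (fun c : ℝ => r * c) (nhdsWithin 0 (Set.Ioi 0)) (nhds (r * 0)) :=
          ((continuous_const.mul continuous_id).tendsto 0).mono_left nhdsWithin_le_nhds
        simpa using this
      · filter_upwards [self_mem_nhdsWithin] with x hx
        exact mul_pos hr hx
    have hexp : Tendsto (fun t : ℝ => Real.exp t / (r * t ^ 2)) atTop atTop := by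
      have := (Real.tendsto_exp_div_pow_atTop 2).atTop_div_const hr
      refine this.congr fun t => ?_
      rw [div_div]
      ring_nf
    have hF : Tendsto (Fq r) (nhdsWithin 0 (Set.Ioi 0)) atTop := by
      apply tendsto_atTop_mono' _ _ (hexp.comp hφ)
      filter_upwards [self_mem_nhdsWithin] with c (hc : 0 < c)
      have h2 := Real.exp_pos (-(1 / (r * c)))
      have hE := Real.exp_pos (1 / (r * c))
      have hrc : r * c ≠ 0 := by positivity
      have key : Real.exp (1 / (r * c)) / (r * (1 / (r * c)) ^ 2)
          = r * c ^ 2 * Real.exp (1 / (r * c)) := by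
        field_simp
      have hcc : (0:ℝ) < r * c ^ 2 := by positivity
      simp only [Function.comp_apply, key, Fq]
      nlinarith
    refine (Tendsto.congr' ?_ hF.inv_tendsto_atTop)
    filter_upwards [self_mem_nhdsWithin] with c hc
    exact (g_eq hr hc).symm
  · -- c → ∞
    have hF : Tendsto (Fq r) atTop atTop := by
      have hb : Tendsto (fun c : ℝ => 2 * r * c ^ 2) atTop atTop := by
        have h1 : Tendsto (fun c : ℝ => c ^ 2) atTop atTop := tendsto_pow_atTop (by norm_num)
        exact h1.const_mul_atTop (by positivity)
      refine tendsto_atTop_mono' atTop ?_ hb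
      filter_upwards with c
      have h2 := Real.exp_pos (-(1 / (r * c)))
      have hE := Real.exp_pos (1 / (r * c))
      have : (0:ℝ) ≤ r * c ^ 2 := by positivity
      unfold Fq
      nlinarith
    refine (Tendsto.congr' ?_ hF.inv_tendsto_atTop)
    filter_upwards [eventually_gt_atTop 0] with c hc
    exact (g_eq hr hc).symm
  · intro c hc
    rw [deriv_g r hr hc]
    have hF := Fq_pos hr hc
    rw [div_eq_zero_iff]
    have hF2 : (Fq r c) ^ 2 ≠ 0 := by positivity
    simp only [hF2, or_false, neg_eq_zero]
    -- algebra
    set x := 1 / (2 * r * c) with hx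
    have h2x : 1 / (r * c) = 2 * x := by
      rw [hx]; field_simp
    have hexp2 : Real.exp (1 / (r * c)) = Real.exp x ^ 2 := by
      rw [h2x, two_mul, Real.exp_add, sq]
    set a := Real.exp x with ha
    have hane : a ≠ 0 := (Real.exp_pos x).ne'
    have hapos : 0 < a := Real.exp_pos x
    have hexpneg : Real.exp (-(1 / (r * c))) = (a ^ 2)⁻¹ := by
      rw [h2x, Real.exp_neg, two_mul, Real.exp_add, ← ha, sq]
    rw [hexp2, hexpneg]
    rw [Real.tanh_eq_sinh_div_cosh, div_eq_iff (Real.cosh_pos x).ne',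
      Real.sinh_eq, Real.cosh_eq, ← ha, Real.exp_neg, ← ha]
    have key : 2 * r * c * (2 + a ^ 2 + (a ^ 2)⁻¹) - (a ^ 2 - (a ^ 2)⁻¹)
        = ((a ^ 2 + 1) / a ^ 2) * (2 * r * c * (a ^ 2 + 1) - (a ^ 2 - 1)) := by
      field_simp
      ring
    rw [key]
    have hfac : (a ^ 2 + 1) / a ^ 2 ≠ 0 := by positivity
    simp only [mul_eq_zero, hfac, false_or, sub_eq_zero]
    constructor
    · intro h
      field_simp
      linear_combination -h
    · intro h
      field_simp at h
      linear_combination -h
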